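/- arXiv:1905.04007 — 2 statements merged into one kernel-verified Lean document; each statement's English description precedes it below -/
import Mathlib

section
/- Let 0 < d < 1 and T_n, T_m > 0, and set the EH times to their duty-cycle maxima τ_n = ((1−d)/d)·T_n and τ_m = ((1−d)/d)·T_m. Assume that whenever T_n ≠ T_m one has min(T_n, T_m) ≤ (1−d)·max(T_n, T_m). Then the collision time simplifies to: col(n,m) = 0 if T_n ≠ T_m, and col(n,m) = T_n if T_n = T_m. In particular, users with different times on air (different spreading factors) do not collide in the time domain. -/
/-- With the EH times set to their duty-cycle maxima `τ = ((1−d)/d)·T`, and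
under the separation condition `min Tₙ Tₘ ≤ (1−d)·max Tₙ Tₘ` whenever
`Tₙ ≠ Tₘ`, the collision time is `0` when the times on air differ and `Tₙ`
when they coincide: users with different spreading factors do not collide. -/
theorem collision_time_max_EH_time
    (d Tn Tm : ℝ) (hd0 : 0 < d) (hd1 : d < 1)
    (hTn : 0 < Tn) (hTm : 0 < Tm)
    (hsep : Tn ≠ Tm → min Tn Tm ≤ (1 - d) * max Tn Tm)
    (τn τm : ℝ)
    (hτn : τn = ((1 - d) / d) * Tn) (hτm : τm = ((1 - d) / d) * Tm) :
    (Tn ≠ Tm → max 0 (min (τn + Tn) (τm + Tm) - max τn τm) = 0) ∧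
    (Tn = Tm → max 0 (min (τn + Tn) (τm + Tm) - max τn τm) = Tn) := by
  subst hτn hτm
  have hd : d ≠ 0 := ne_of_gt hd0
  have hc : 0 ≤ (1 - d) / d := div_nonneg (by linarith) hd0.le
  have hsum : ∀ T : ℝ, ((1 - d) / d) * T + T = T / d := by
    intro T; field_simp; ring
  constructor
  · intro hne
    have hsep' := hsep hne
    apply max_eq_left
    rw [hsum, hsum, sub_nonpos]
    have hmin : min (Tn / d) (Tm / d) = min Tn Tm / d := by
      rcases le_total Tn Tm with h | h <;>
        simp [min_def, div_le_div_iff_of_pos_right hd0, h, min_eq_left, min_eq_right]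
    have hmax : max (((1 - d) / d) * Tn) (((1 - d) / d) * Tm)
        = ((1 - d) / d) * max Tn Tm := by
      rcases le_total Tn Tm with h | h <;>
        simp [max_def, h, mul_le_mul_of_nonneg_left h hc,
          mul_le_mul_of_nonneg_left h hc]
    rw [hmin, hmax, div_le_iff₀ hd0]
    calc min Tn Tm ≤ (1 - d) * max Tn Tm := hsep'
      _ = (1 - d) / d * max Tn Tm * d := by field_simp
  · intro heq
    subst heq
    rw [min_self, max_self]
    have : ((1 - d) / d * Tn + Tn) - (1 - d) / d * Tn = Tn := by ring
    rw [this, max_eq_right hTn.le]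
end

section
/- Let g > 0, σ² > 0, P_t > 0, E > 0, T > 0, d ∈ (0,1), δ₁ = ((1−d)/d)·T, and δ₂ = min(P_t·T/E, δ₁). Suppose the aggregate interference I : ℝ → ℝ is nonnegative and nondecreasing on [δ₂, δ₁]. Define R(τ) = log(1 + min(P_t, τ·E/T)·g / (I(τ) + σ²)). Then the restriction of R to [δ₂, δ₁] attains its maximum at τ = δ₂, i.e. R(τ) ≤ R(δ₂) for all τ ∈ [δ₂, δ₁]. -/
/-- If the aggregate interference `I` is nonnegative and nondecreasing on
`[δ₂, δ₁]`, the rate `R(τ) = log (1 + min Pₜ (τE/T) · g / (I τ + σ²))`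
restricted to `[δ₂, δ₁]` attains its maximum at `τ = δ₂`. -/
theorem optimal_EH_time_nondecreasing_interference
    (g σ2 Pt E T d : ℝ)
    (hg : 0 < g) (hσ : 0 < σ2) (hPt : 0 < Pt) (hE : 0 < E) (hT : 0 < T)
    (hd0 : 0 < d) (hd1 : d < 1)
    (δ1 δ2 : ℝ) (hδ1 : δ1 = ((1 - d) / d) * T) (hδ2 : δ2 = min (Pt * T / E) δ1)
    (I : ℝ → ℝ)
    (hInonneg : ∀ τ ∈ Set.Icc δ2 δ1, 0 ≤ I τ)
    (hImono : MonotoneOn I (Set.Icc δ2 δ1))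
    (R : ℝ → ℝ)
    (hR : ∀ τ : ℝ, R τ = Real.log (1 + min Pt (τ * E / T) * g / (I τ + σ2))) :
    ∀ τ ∈ Set.Icc δ2 δ1, R τ ≤ R δ2 := by
  intro τ hτ
  have hδ2le : δ2 ≤ δ1 := hδ2 ▸ min_le_right _ _
  have hδ2mem : δ2 ∈ Set.Icc δ2 δ1 := ⟨le_refl _, hδ2le⟩
  rcases le_or_gt (Pt * T / E) δ1 with hc | hc
  · -- δ2 = Pt*T/E
    have hδ2eq : δ2 = Pt * T / E := by rw [hδ2, min_eq_left hc]
    have hmin2 : min Pt (δ2 * E / T) = Pt := by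
      rw [hδ2eq]
      have : Pt * T / E * E / T = Pt := by field_simp
      rw [this, min_self]
    have hminτ : min Pt (τ * E / T) = Pt := by
      apply min_eq_left
      have h1 : δ2 * E / T ≤ τ * E / T := by
        gcongr
        exact hτ.1
      have h2 : δ2 * E / T = Pt := by rw [hδ2eq]; field_simp
      linarith
    have hI : I δ2 ≤ I τ := hImono hδ2mem hτ hτ.1
    have hden2 : 0 < I δ2 + σ2 := by
      have := hInonneg δ2 hδ2mem; linarith
    have hdenτ : 0 < I τ + σ2 := by
      have := hInonneg τ hτ; linarith
    rw [hR, hR, hmin2, hminτ]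
    apply Real.log_le_log
    · have : 0 ≤ Pt * g / (I τ + σ2) := by positivity
      linarith
    · have : Pt * g / (I τ + σ2) ≤ Pt * g / (I δ2 + σ2) :=
        div_le_div_of_nonneg_left (by positivity) hden2 (by linarith)
      linarith
  · -- δ2 = δ1, interval is a singleton
    have hδ2eq : δ2 = δ1 := by rw [hδ2, min_eq_right hc.le]
    have : τ = δ2 := le_antisymm (hδ2eq ▸ hτ.2) hτ.1
    rw [this]
end
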